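/- Let A be an M×M real matrix, 0 ≤ γ < 1, and suppose that for every j, the sum of |A_{i,j}| over i ≠ j is at most γ|A_{j,j}| (column diagonal dominance). Let λ = min_i |A_{i,i}| > 0. Then for every vector a ∈ ℝ^M, the ℓ¹ norm of Aa satisfies ‖Aa‖_1 ≥ (1−γ)λ‖a‖_1. -/

import Mathlib

theorem stmt_3 {M : ℕ} (hM : 0 < M) (A : Matrix (Fin M) (Fin M) ℝ) (γ lam : ℝ)
    (hγ0 : 0 ≤ γ) (hγ1 : γ < 1) (hlam : 0 < lam)
    (hdiag : ∀ i, lam ≤ |A i i|)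
    (hcol : ∀ j, ∑ i ∈ Finset.univ.erase j, |A i j| ≤ γ * |A j j|) :
    ∀ a : Fin M → ℝ, (1 - γ) * lam * ∑ i, |a i| ≤ ∑ i, |A.mulVec a i| := by
  intro a
  have key : ∀ i, |A i i * a i| - ∑ j ∈ Finset.univ.erase i, |A i j * a j|
      ≤ |A.mulVec a i| := by
    intro i
    have h1 : A.mulVec a i = A i i * a i + ∑ j ∈ Finset.univ.erase i, A i j * a j := by
      rw [Matrix.mulVec, dotProduct]
      exact (Finset.add_sum_erase _ _ (Finset.mem_univ i)).symm
    rw [h1]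
    have h2 : |∑ j ∈ Finset.univ.erase i, A i j * a j|
        ≤ ∑ j ∈ Finset.univ.erase i, |A i j * a j| :=
      Finset.abs_sum_le_sum_abs _ _
    have h3 := abs_sub_abs_le_abs_sub (A i i * a i)
      (-(∑ j ∈ Finset.univ.erase i, A i j * a j))
    rw [abs_neg, sub_neg_eq_add] at h3
    linarith
  have hsum : ∑ i, (|A i i * a i| - ∑ j ∈ Finset.univ.erase i, |A i j * a j|)
      ≤ ∑ i, |A.mulVec a i| := Finset.sum_le_sum (fun i _ => key i)
  have hswap : ∑ i, ∑ j ∈ Finset.univ.erase i, |A i j * a j|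
      = ∑ j, ∑ i ∈ Finset.univ.erase j, |A i j * a j| := by
    apply Finset.sum_comm'
    intro x y
    simp [Finset.mem_erase, eq_comm, and_comm]
  have hcolbound : ∀ j, ∑ i ∈ Finset.univ.erase j, |A i j * a j| ≤ γ * |A j j| * |a j| := by
    intro j
    calc ∑ i ∈ Finset.univ.erase j, |A i j * a j|
        = (∑ i ∈ Finset.univ.erase j, |A i j|) * |a j| := by
          rw [Finset.sum_mul]; simp [abs_mul]
      _ ≤ γ * |A j j| * |a j| := by
          apply mul_le_mul_of_nonneg_right (hcol j) (abs_nonneg _)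
  have hlow : ∀ i, (1 - γ) * lam * |a i| ≤ |A i i * a i| - γ * |A i i| * |a i| := by
    intro i
    rw [abs_mul]
    have h1 : (1 - γ) * lam ≤ (1 - γ) * |A i i| :=
      mul_le_mul_of_nonneg_left (hdiag i) (by linarith)
    nlinarith [abs_nonneg (a i), abs_nonneg (A i i)]
  calc (1 - γ) * lam * ∑ i, |a i| = ∑ i, (1 - γ) * lam * |a i| := by rw [Finset.mul_sum]
    _ ≤ ∑ i, (|A i i * a i| - γ * |A i i| * |a i|) :=
        Finset.sum_le_sum (fun i _ => hlow i)
    _ ≤ ∑ i, (|A i i * a i| - ∑ j ∈ Finset.univ.erase i, |A i j * a j|) := by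
        rw [Finset.sum_sub_distrib, Finset.sum_sub_distrib, hswap]
        exact sub_le_sub_left (Finset.sum_le_sum (fun j _ => hcolbound j)) _
    _ ≤ ∑ i, |A.mulVec a i| := hsum
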